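/- Let (E_t)_{t=1}^T be independent and identically distributed Bernoulli random variables with success probability p ∈ [0,1], let Δ ∈ ℕ, and let t_1 < t_2 < ... < t_N be deterministic time indices in {1,...,T−Δ} satisfying t_{j+1} − t_j > Δ for all j = 1,...,N−1. Then the number of trigger coincidences K = Σ_{j=1}^N max_{δ=0,...,Δ} E_{t_j+δ} has the binomial distribution with parameters N and π = 1 − (1−p)^{Δ+1}; that is, P(K = k) = C(N,k) · π^k · (1−π)^{N−k} for every 0 ≤ k ≤ N. -/

import Mathlib

open MeasureTheory ProbabilityTheory
open scoped ENNReal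

section Aux

variable {Ω : Type*} [MeasurableSpace Ω]

private lemma meas_max' {f g : Ω → ℕ} (hf : Measurable f) (hg : Measurable g) :
    Measurable (fun ω => f ω ⊔ g ω) :=
  (measurable_of_countable (fun p : ℕ × ℕ => p.1 ⊔ p.2)).comp (hf.prodMk hg)

private lemma meas_add' {f g : Ω → ℕ} (hf : Measurable f) (hg : Measurable g) :
    Measurable (fun ω => f ω + g ω) :=
  (measurable_of_countable (fun p : ℕ × ℕ => p.1 + p.2)).comp (hf.prodMk hg)

private lemma meas_finset_sup (s : Finset ℕ) (f : ℕ → Ω → ℕ) (hf : ∀ i, Measurable (f i)) :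
    Measurable (fun ω => s.sup (fun i => f i ω)) := by
  classical
  induction s using Finset.induction_on with
  | empty => simpa using measurable_const
  | insert _ _ _ ih =>
    simp only [Finset.sup_insert]
    exact meas_max' (hf _) ih

private lemma meas_finset_sum (s : Finset ℕ) (f : ℕ → Ω → ℕ) (hf : ∀ i, Measurable (f i)) :
    Measurable (fun ω => ∑ i ∈ s, f i ω) := by
  classical
  induction s using Finset.induction_on with
  | empty => simpa using measurable_const
  | insert _ _ h ih =>
    simp only [Finset.sum_insert h]
    exact meas_add' (hf _) ih

end Aux

/-- For an iid Bernoulli(p) process `E` of length `T` and deterministic event times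
`t_1 < ... < t_N` in `{1,...,T-Δ}` separated by more than `Δ` time steps, the number of
trigger coincidences `K = Σ_j max_{δ=0,...,Δ} E_{t_j+δ}` is binomially distributed with
parameters `N` and `π = 1 - (1-p)^(Δ+1)`. -/
theorem trigger_coincidences_binomial
    {Ω : Type*} [MeasureSpace Ω] [IsProbabilityMeasure (ℙ : Measure Ω)]
    (E : ℕ → Ω → ℕ) (hmeas : ∀ t, Measurable (E t))
    (hindep : iIndepFun E ℙ)
    (hval : ∀ t ω, E t ω = 0 ∨ E t ω = 1)
    (p : ℝ) (hp0 : 0 ≤ p) (hp1 : p ≤ 1)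
    (hbern : ∀ t, ℙ {ω | E t ω = 1} = ENNReal.ofReal p)
    (T Δ N : ℕ) (ts : ℕ → ℕ)
    (hrange : ∀ j < N, 1 ≤ ts j ∧ ts j + Δ ≤ T)
    (hgap : ∀ j, j + 1 < N → ts j + Δ < ts (j + 1))
    (k : ℕ) (hk : k ≤ N) :
    ℙ {ω | (∑ j ∈ Finset.range N,
        (Finset.range (Δ + 1)).sup (fun δ => E (ts j + δ) ω)) = k}
      = ENNReal.ofReal ((N.choose k : ℝ) * (1 - (1 - p) ^ (Δ + 1)) ^ k
          * (1 - (1 - (1 - p) ^ (Δ + 1))) ^ (N - k)) := by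
  classical
  -- real-valued parameters
  set qr : ℝ := (1 - p) ^ (Δ + 1) with hqr
  have h1p0 : (0:ℝ) ≤ 1 - p := by linarith
  have h1p1 : (1:ℝ) - p ≤ 1 := by linarith
  have hqr0 : 0 ≤ qr := pow_nonneg h1p0 _
  have hqr1 : qr ≤ 1 := pow_le_one₀ h1p0 h1p1
  set q : ℝ≥0∞ := ENNReal.ofReal qr with hq
  set π : ℝ≥0∞ := ENNReal.ofReal (1 - qr) with hπ
  -- the block random variables
  set X : ℕ → Ω → ℕ := fun j ω => (Finset.range (Δ + 1)).sup (fun δ => E (ts j + δ) ω) with hX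
  have hXmeas : ∀ j, Measurable (X j) := fun j =>
    meas_finset_sup _ _ (fun δ => hmeas _)
  have hX01 : ∀ j ω, X j ω = 0 ∨ X j ω = 1 := by
    intro j ω
    have : X j ω ≤ 1 := Finset.sup_le (fun δ _ => by rcases hval (ts j + δ) ω with h | h <;> omega)
    omega
  -- probability that a single E is zero
  have hE0 : ∀ t, ℙ {ω | E t ω = 0} = ENNReal.ofReal (1 - p) := by
    intro t
    have hset : {ω | E t ω = 0} = {ω | E t ω = 1}ᶜ := by
      ext ω
      rcases hval t ω with h | h <;> simp [h]
    have hm1 : MeasurableSet {ω | E t ω = 1} := (hmeas t) (measurableSet_singleton 1)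
    rw [hset, measure_compl hm1 (measure_ne_top _ _), hbern, measure_univ,
      ← ENNReal.ofReal_one, ← ENNReal.ofReal_sub _ hp0]
  -- the blocks
  set B : ℕ → Finset ℕ := fun j => (Finset.range (Δ + 1)).image (fun δ => ts j + δ) with hB
  -- probability X j = 0
  have hX0prob : ∀ j, ℙ {ω | X j ω = 0} = q := by
    intro j
    have hset : {ω | X j ω = 0} = ⋂ i ∈ B j, E i ⁻¹' {0} := by
      ext ω
      simp only [Set.mem_setOf_eq, hX, hB, Set.mem_iInter, Finset.mem_image,
        Set.mem_preimage, Set.mem_singleton_iff]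
      rw [show (0:ℕ) = ⊥ from rfl, Finset.sup_eq_bot_iff]
      constructor
      · rintro h i ⟨δ, hδ, rfl⟩
        exact h δ hδ
      · intro h δ hδ
        exact h _ ⟨δ, hδ, rfl⟩
    have hprod := hindep.measure_inter_preimage_eq_mul (S := B j)
      (sets := fun _ => ({0} : Set ℕ)) (fun i _ => measurableSet_singleton 0)
    rw [hset, hprod]
    have : ∀ i ∈ B j, ℙ (E i ⁻¹' {0}) = ENNReal.ofReal (1 - p) := by
      intro i _
      have : E i ⁻¹' {0} = {ω | E i ω = 0} := by ext ω; simp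
      rw [this, hE0]
    rw [Finset.prod_congr rfl this, Finset.prod_const]
    have hcard : (B j).card = Δ + 1 := by
      rw [hB]
      rw [Finset.card_image_of_injective _ (add_right_injective _), Finset.card_range]
    rw [hcard, hq, hqr, ← ENNReal.ofReal_pow h1p0]
  -- probability X j = 1
  have hX1prob : ∀ j, ℙ {ω | X j ω = 1} = π := by
    intro j
    have hset : {ω | X j ω = 1} = {ω | X j ω = 0}ᶜ := by
      ext ω
      rcases hX01 j ω with h | h <;> simp [h]
    have hm0 : MeasurableSet {ω | X j ω = 0} := (hXmeas j) (measurableSet_singleton 0)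
    rw [hset, measure_compl hm0 (measure_ne_top _ _), hX0prob, measure_univ, hq, hπ,
      ← ENNReal.ofReal_one, ← ENNReal.ofReal_sub _ hqr0]
  -- ordering of blocks
  have hmono : ∀ j < N, ∀ i < j, ts i + Δ < ts j := by
    intro j hj
    induction j with
    | zero => omega
    | succ n ih =>
      intro i hi
      have hgn : ts n + Δ < ts (n + 1) := hgap n hj
      rcases Nat.lt_succ_iff_lt_or_eq.mp hi with h | rfl
      · have := ih (by omega) i h
        omega
      · exact hgn
  -- disjointness of block unions
  have hdisj : ∀ n < N, Disjoint ((Finset.range n).biUnion B) (B n) := by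
    intro n hn
    rw [Finset.disjoint_left]
    intro x hx hx'
    simp only [Finset.mem_biUnion, Finset.mem_range, hB, Finset.mem_image] at hx hx'
    obtain ⟨i, hi, δ, hδ, rfl⟩ := hx
    obtain ⟨δ', hδ', heq⟩ := hx'
    have h1 : ts i + Δ < ts n := hmono n hn i hi
    omega
  -- independence of partial sum and next block
  have hindep2 : ∀ n < N,
      IndepFun (fun ω => ∑ j ∈ Finset.range n, X j ω) (X n) ℙ := by
    intro n hn
    set S : Finset ℕ := (Finset.range n).biUnion B with hS
    have hbase := hindep.indepFun_finset S (B n) (hdisj n hn) hmeas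
    set F : (↥S → ℕ) → ℕ := fun v =>
      ∑ j ∈ Finset.range n, (Finset.range (Δ + 1)).sup
        (fun δ => if h : ts j + δ ∈ S then v ⟨ts j + δ, h⟩ else 0) with hF
    set G : (↥(B n) → ℕ) → ℕ := fun v =>
      (Finset.range (Δ + 1)).sup
        (fun δ => if h : ts n + δ ∈ B n then v ⟨ts n + δ, h⟩ else 0) with hG
    have hcomp := hbase.comp (φ := F) (ψ := G)
      (measurable_of_countable F) (measurable_of_countable G)
    have heq1 : (F ∘ fun ω (i : ↥S) => E i ω)
        = fun ω => ∑ j ∈ Finset.range n, X j ω := by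
      funext ω
      simp only [Function.comp_apply, hF]
      refine Finset.sum_congr rfl (fun j hj => ?_)
      refine Finset.sup_congr rfl (fun δ hδ => ?_)
      have hmem : ts j + δ ∈ S := by
        simp only [hS, Finset.mem_biUnion, hB]
        exact ⟨j, hj, Finset.mem_image.mpr ⟨δ, hδ, rfl⟩⟩
      rw [dif_pos hmem]
    have heq2 : (G ∘ fun ω (i : ↥(B n)) => E i ω) = X n := by
      funext ω
      simp only [Function.comp_apply, hG, hX]
      refine Finset.sup_congr rfl (fun δ hδ => ?_)
      have hmem : ts n + δ ∈ B n := by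
        simp only [hB]
        exact Finset.mem_image.mpr ⟨δ, hδ, rfl⟩
      rw [dif_pos hmem]
    rwa [heq1, heq2] at hcomp
  -- the main induction
  have main : ∀ n ≤ N, ∀ m : ℕ,
      ℙ {ω | (∑ j ∈ Finset.range n, X j ω) = m}
        = (n.choose m : ℝ≥0∞) * π ^ m * q ^ (n - m) := by
    intro n
    induction n with
    | zero =>
      intro _ m
      cases m with
      | zero => simp
      | succ m' => simp
    | succ n ih =>
      intro hn m
      have hnN : n < N := by omega
      have hind' := hindep2 n hnN
      have hSmeas : Measurable (fun ω => ∑ j ∈ Finset.range n, X j ω) :=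
        meas_finset_sum _ _ hXmeas
      have hmul : ∀ a b : ℕ,
          ℙ ({ω | (∑ j ∈ Finset.range n, X j ω) = a} ∩ {ω | X n ω = b})
            = ℙ {ω | (∑ j ∈ Finset.range n, X j ω) = a} * ℙ {ω | X n ω = b} := by
        intro a b
        have := hind'.measure_inter_preimage_eq_mul ({a} : Set ℕ) ({b} : Set ℕ)
          (measurableSet_singleton a) (measurableSet_singleton b)
        simpa [Set.preimage, Set.mem_singleton_iff] using this
      have hsum : ∀ ω, (∑ j ∈ Finset.range (n+1), X j ω)
          = (∑ j ∈ Finset.range n, X j ω) + X n ω := fun ω => Finset.sum_range_succ _ _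
      cases m with
      | zero =>
        have hset : {ω | (∑ j ∈ Finset.range (n+1), X j ω) = 0}
            = {ω | (∑ j ∈ Finset.range n, X j ω) = 0} ∩ {ω | X n ω = 0} := by
          ext ω
          simp only [Set.mem_setOf_eq, Set.mem_inter_iff, hsum ω]
          omega
        rw [hset, hmul, ih (by omega) 0, hX0prob]
        simp [pow_succ]
      | succ m' =>
        have hset : {ω | (∑ j ∈ Finset.range (n+1), X j ω) = m' + 1}
            = ({ω | (∑ j ∈ Finset.range n, X j ω) = m' + 1} ∩ {ω | X n ω = 0})
              ∪ ({ω | (∑ j ∈ Finset.range n, X j ω) = m'} ∩ {ω | X n ω = 1}) := by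
          ext ω
          simp only [Set.mem_setOf_eq, Set.mem_inter_iff, Set.mem_union, hsum ω]
          rcases hX01 n ω with h | h <;> simp [h] <;> omega
        have hdisjset : Disjoint
            ({ω | (∑ j ∈ Finset.range n, X j ω) = m' + 1} ∩ {ω | X n ω = 0})
            ({ω | (∑ j ∈ Finset.range n, X j ω) = m'} ∩ {ω | X n ω = 1}) := by
          rw [Set.disjoint_left]
          rintro ω ⟨_, h0⟩ ⟨_, h1⟩
          simp only [Set.mem_setOf_eq] at h0 h1
          omega
        have hm2 : MeasurableSet
            ({ω | (∑ j ∈ Finset.range n, X j ω) = m'} ∩ {ω | X n ω = 1}) :=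
          (hSmeas (measurableSet_singleton m')).inter ((hXmeas n) (measurableSet_singleton 1))
        rw [hset, measure_union hdisjset hm2, hmul, hmul, ih (by omega) (m' + 1),
          ih (by omega) m', hX0prob, hX1prob]
        -- arithmetic
        rw [Nat.succ_sub_succ]
        rcases le_or_gt (m' + 1) n with hle | hlt
        · have hpow : q ^ (n - (m' + 1)) * q = q ^ (n - m') := by
            rw [← pow_succ]
            congr 1
            omega
          have hπpow : π ^ m' * π = π ^ (m' + 1) := by rw [pow_succ]
          have hchoose : ((n+1).choose (m'+1) : ℝ≥0∞)
              = (n.choose (m'+1) : ℝ≥0∞) + (n.choose m' : ℝ≥0∞) := by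
            rw [Nat.choose_succ_succ]
            push_cast
            ring
          rw [hchoose]
          calc (n.choose (m'+1) : ℝ≥0∞) * π ^ (m'+1) * q ^ (n - (m'+1)) * q
                + (n.choose m' : ℝ≥0∞) * π ^ m' * q ^ (n - m') * π
              = (n.choose (m'+1) : ℝ≥0∞) * π ^ (m'+1) * (q ^ (n - (m'+1)) * q)
                + (n.choose m' : ℝ≥0∞) * (π ^ m' * π) * q ^ (n - m') := by ring
            _ = ((n.choose (m'+1) : ℝ≥0∞) + (n.choose m' : ℝ≥0∞)) * π ^ (m'+1) * q ^ (n - m')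
                := by rw [hpow, hπpow]; ring
        · have hc1 : n.choose (m' + 1) = 0 := Nat.choose_eq_zero_of_lt hlt
          have hc2 : (n+1).choose (m'+1) = n.choose m' := by
            rw [Nat.choose_succ_succ, hc1]; omega
          rw [hc1, hc2]
          have hπpow : π ^ m' * π = π ^ (m' + 1) := by rw [pow_succ]
          simp only [Nat.cast_zero]
          calc (0:ℝ≥0∞) * π ^ (m'+1) * q ^ (n - (m'+1)) * q
              + (n.choose m' : ℝ≥0∞) * π ^ m' * q ^ (n - m') * π
              = (n.choose m' : ℝ≥0∞) * (π ^ m' * π) * q ^ (n - m') := by ring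
            _ = (n.choose m' : ℝ≥0∞) * π ^ (m'+1) * q ^ (n - m') := by rw [hπpow]
  -- conclude
  have := main N le_rfl k
  rw [show {ω | (∑ j ∈ Finset.range N,
      (Finset.range (Δ + 1)).sup (fun δ => E (ts j + δ) ω)) = k}
    = {ω | (∑ j ∈ Finset.range N, X j ω) = k} from rfl, this]
  have hπr0 : 0 ≤ 1 - qr := by linarith
  rw [ENNReal.ofReal_mul (by positivity), ENNReal.ofReal_mul (by positivity),
    ENNReal.ofReal_natCast, ENNReal.ofReal_pow hπr0, ENNReal.ofReal_pow (by linarith : (0:ℝ) ≤ 1 - (1 - qr))]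
  rw [hπ, hq]
  congr 2
  · norm_num
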